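/- Let G=(V,E) be a finite simple connected graph with maximum degree Δ such that every vertex has odd degree. Then there is a partition V = A ∪ B with #E(A,B) ≥ (1/2 + 1/(3Δ))·|E|. -/

import Mathlib

open Finset

variable {V : Type*} [Fintype V] [DecidableEq V]

/-- Number of neighbors of `v` lying in `S`. -/
def degIn (G : SimpleGraph V) [DecidableRel G.Adj] (v : V) (S : Finset V) : ℕ :=
  (S.filter (G.Adj v)).card

/-- Number of edges with one endpoint in `X` and the other in `Y`
(each edge counted once; for `X = Y` this is the number of edges inside `X`). -/
def eBtw (G : SimpleGraph V) [DecidableRel G.Adj] (X Y : Finset V) : ℕ :=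
  (G.edgeFinset.filter (fun e => ∃ x ∈ X, ∃ y ∈ Y, e = s(x, y))).card

lemma degIn_eq_sum (G : SimpleGraph V) [DecidableRel G.Adj] (v : V) (S : Finset V) :
    degIn G v S = ∑ u ∈ S, if G.Adj v u then 1 else 0 := by
  rw [degIn, Finset.card_filter]

/-- Double counting: pairs (v,u) with v∈S, u∈T, adjacent. -/
lemma sum_degIn_comm (G : SimpleGraph V) [DecidableRel G.Adj] (S T : Finset V) :
    ∑ v ∈ S, degIn G v T = ∑ v ∈ T, degIn G v S := by
  simp only [degIn_eq_sum]
  rw [Finset.sum_comm]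
  apply Finset.sum_congr rfl
  intro u _
  apply Finset.sum_congr rfl
  intro v _
  simp [G.adj_comm]

lemma degIn_add_degIn_compl (G : SimpleGraph V) [DecidableRel G.Adj] (v : V) (S : Finset V) :
    degIn G v S + degIn G v Sᶜ = G.degree v := by
  rw [degIn, degIn, ← Finset.card_union_of_disjoint
      (Finset.disjoint_filter_filter disjoint_compl_right),
    ← Finset.filter_union, Finset.union_compl,
    ← SimpleGraph.neighborFinset_eq_filter, SimpleGraph.degree]

lemma degIn_erase_self (G : SimpleGraph V) [DecidableRel G.Adj] (v : V) (A : Finset V) :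
    degIn G v (A.erase v) = degIn G v A := by
  unfold degIn
  congr 1
  ext u
  simp only [Finset.mem_filter, Finset.mem_erase]
  constructor
  · rintro ⟨⟨-, hu⟩, h⟩; exact ⟨hu, h⟩
  · rintro ⟨hu, h⟩
    refine ⟨⟨?_, hu⟩, h⟩
    rintro rfl; exact G.loopless.irrefl _ h

/-- Effect of moving a vertex out of `A` on the cut functional. -/
lemma move_identity (G : SimpleGraph V) [DecidableRel G.Adj] (A : Finset V) (v : V)
    (hv : v ∈ A) :
    (∑ u ∈ A.erase v, degIn G u (A.erase v)ᶜ) + degIn G v Aᶜ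
      = (∑ u ∈ A, degIn G u Aᶜ) + degIn G v (A.erase v) := by
  have hcompl : (A.erase v)ᶜ = insert v Aᶜ := by
    ext u
    simp only [Finset.mem_compl, Finset.mem_erase, Finset.mem_insert, not_and_or, not_not]
    try tauto
  have hvA : v ∉ Aᶜ := by simp [hv]
  have hstep : ∀ u ∈ A.erase v,
      degIn G u (A.erase v)ᶜ = degIn G u Aᶜ + (if G.Adj v u then 1 else 0) := by
    intro u _
    simp only [hcompl, degIn, Finset.filter_insert]
    by_cases h : G.Adj u v
    · rw [if_pos h, Finset.card_insert_of_notMem (by simp [hvA]),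
        if_pos ((G.adj_comm u v).mp h)]
    · rw [if_neg h, if_neg (fun h' => h ((G.adj_comm v u).mp h')), add_zero]
  rw [Finset.sum_congr rfl hstep, Finset.sum_add_distrib, ← degIn_eq_sum,
    ← Finset.add_sum_erase _ _ hv]
  ring

/-- `eBtw G A Aᶜ` equals the sum of outward degrees. -/
lemma eBtw_compl_eq (G : SimpleGraph V) [DecidableRel G.Adj] (A B : Finset V)
    (hd : Disjoint A B) :
    eBtw G A B = ∑ v ∈ A, degIn G v B := by
  have : ∑ v ∈ A, degIn G v B = ((A ×ˢ B).filter fun p => G.Adj p.1 p.2).card := by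
    rw [Finset.card_filter, Finset.sum_product]
    simp [degIn_eq_sum]
  rw [this, eBtw]
  refine (Finset.card_bij (fun p _ => s(p.1, p.2)) ?_ ?_ ?_).symm
  · rintro ⟨x, y⟩ hp
    simp only [Finset.mem_filter, Finset.mem_product] at hp
    obtain ⟨⟨hx, hy⟩, hadj⟩ := hp
    simp only [Finset.mem_filter, SimpleGraph.mem_edgeFinset, SimpleGraph.mem_edgeSet]
    exact ⟨hadj, x, hx, y, hy, rfl⟩
  · rintro ⟨x, y⟩ hp ⟨x', y'⟩ hp' h
    simp only [Finset.mem_filter, Finset.mem_product] at hp hp'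
    rw [Sym2.eq_iff] at h
    rcases h with ⟨rfl, rfl⟩ | ⟨rfl, rfl⟩
    · rfl
    · exact absurd hp'.1.2 (Finset.disjoint_left.mp hd hp.1.1)
  · intro e he
    simp only [Finset.mem_filter, SimpleGraph.mem_edgeFinset, SimpleGraph.mem_edgeSet] at he
    obtain ⟨hE, x, hx, y, hy, rfl⟩ := he
    refine ⟨(x, y), ?_, rfl⟩
    simp only [Finset.mem_filter, Finset.mem_product]
    exact ⟨⟨hx, hy⟩, hE⟩

theorem odd_degree_judicious_partition (G : SimpleGraph V) [DecidableRel G.Adj]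
    (hconn : G.Connected) (hΔ : 1 ≤ G.maxDegree)
    (hodd : ∀ v : V, Odd (G.degree v)) :
    ∃ A B : Finset V, A ∪ B = Finset.univ ∧ Disjoint A B ∧
      ((1 : ℚ) / 2 + 1 / (3 * G.maxDegree)) * G.edgeFinset.card ≤ eBtw G A B := by
  classical
  set g : Finset V → ℕ := fun S => ∑ v ∈ S, degIn G v Sᶜ with hg
  obtain ⟨A, -, hmax⟩ := Finset.exists_max_image (univ : Finset V).powerset g
    ⟨∅, by simp⟩
  have hmax' : ∀ S : Finset V, g S ≤ g A := fun S => hmax S (by simp)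
  -- g is complement-symmetric
  have gsymm : ∀ S : Finset V, g Sᶜ = g S := by
    intro S
    simp only [hg]
    rw [sum_degIn_comm, compl_compl]
  -- the local maximality condition for a set S achieving the max
  have key : ∀ S : Finset V, g S = g A → ∀ v ∈ S, degIn G v S + 1 ≤ degIn G v Sᶜ := by
    intro S hS v hv
    have hle : degIn G v (S.erase v) ≤ degIn G v Sᶜ := by
      have hid := move_identity G S v hv
      have h2 : g (S.erase v) ≤ g S := hS ▸ hmax' _
      simp only [hg] at h2 ⊢
      omega
    rw [degIn_erase_self] at hle
    have hdeg := degIn_add_degIn_compl G v S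
    obtain ⟨k, hk⟩ := hodd v
    omega
  have keyA : ∀ v ∈ A, degIn G v A + 1 ≤ degIn G v Aᶜ := key A rfl
  have keyB : ∀ v ∈ Aᶜ, degIn G v Aᶜ + 1 ≤ degIn G v A := by
    intro v hv
    have := key Aᶜ (gsymm A) v hv
    rwa [compl_compl] at this
  -- summed inequalities
  have S1 : (∑ v ∈ A, degIn G v A) + A.card ≤ g A := by
    calc (∑ v ∈ A, degIn G v A) + A.card = ∑ v ∈ A, (degIn G v A + 1) := by
          rw [Finset.sum_add_distrib, Finset.sum_const, smul_eq_mul, mul_one]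
      _ ≤ ∑ v ∈ A, degIn G v Aᶜ := Finset.sum_le_sum keyA
      _ = g A := rfl
  have S2 : (∑ v ∈ Aᶜ, degIn G v Aᶜ) + Aᶜ.card ≤ g A := by
    calc (∑ v ∈ Aᶜ, degIn G v Aᶜ) + Aᶜ.card = ∑ v ∈ Aᶜ, (degIn G v Aᶜ + 1) := by
          rw [Finset.sum_add_distrib, Finset.sum_const, smul_eq_mul, mul_one]
      _ ≤ ∑ v ∈ Aᶜ, degIn G v A := Finset.sum_le_sum keyB
      _ = g Aᶜ := by simp only [hg, compl_compl]
      _ = g A := gsymm A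
  -- handshake
  set m := G.edgeFinset.card with hm
  set n := (Finset.univ : Finset V).card with hn
  have handshake : (∑ v ∈ A, degIn G v A) + (∑ v ∈ Aᶜ, degIn G v Aᶜ) + 2 * g A = 2 * m := by
    have hsplit : ∑ v : V, G.degree v = (∑ v ∈ A, G.degree v) + ∑ v ∈ Aᶜ, G.degree v := by
      rw [← Finset.sum_union disjoint_compl_right, Finset.union_compl]
    have h1 : ∀ v ∈ A, G.degree v = degIn G v A + degIn G v Aᶜ :=
      fun v _ => (degIn_add_degIn_compl G v A).symm
    have h2 : ∀ v ∈ Aᶜ, G.degree v = degIn G v A + degIn G v Aᶜ :=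
      fun v _ => (degIn_add_degIn_compl G v A).symm
    have h3 : g Aᶜ = ∑ v ∈ Aᶜ, degIn G v A := by
      simp only [hg, compl_compl]
    have := G.sum_degrees_eq_twice_card_edges
    rw [hsplit, Finset.sum_congr rfl h1, Finset.sum_congr rfl h2,
      Finset.sum_add_distrib, Finset.sum_add_distrib] at this
    have hgAc := gsymm A
    rw [h3] at hgAc
    simp only [hg] at *
    omega
  have hcard : A.card + Aᶜ.card = n := by
    rw [← Finset.card_union_of_disjoint disjoint_compl_right, Finset.union_compl]
  have main : 2 * m + n ≤ 4 * g A := by omega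
  have hΔn : 2 * m ≤ G.maxDegree * n := by
    calc 2 * m = ∑ v : V, G.degree v := (G.sum_degrees_eq_twice_card_edges).symm
      _ ≤ ∑ _v : V, G.maxDegree := Finset.sum_le_sum fun v _ => G.degree_le_maxDegree v
      _ = G.maxDegree * n := by rw [Finset.sum_const, smul_eq_mul, mul_comm]
  -- final numeric inequality
  refine ⟨A, Aᶜ, Finset.union_compl A, disjoint_compl_right, ?_⟩
  rw [eBtw_compl_eq G A Aᶜ disjoint_compl_right]
  have hgA : (∑ v ∈ A, degIn G v Aᶜ) = g A := rfl
  rw [hgA]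
  set Δ := G.maxDegree with hΔdef
  have hnat : (3 * Δ + 2) * m ≤ 6 * Δ * g A := by nlinarith [main, hΔn, hΔ]
  have hd0 : (0 : ℚ) < (Δ : ℚ) := by exact_mod_cast hΔ
  have hq : ((3 * Δ + 2) * m : ℚ) ≤ (6 * Δ * g A : ℚ) := by exact_mod_cast hnat
  have h3 : (3 : ℚ) * (Δ : ℚ) ≠ 0 := by positivity
  have h6 : (0 : ℚ) < 6 * (Δ : ℚ) := by positivity
  have hrw : (1 : ℚ) / 2 + 1 / (3 * (Δ : ℚ)) = (3 * (Δ : ℚ) + 2) / (6 * Δ) := by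
    rw [div_add_div _ _ two_ne_zero h3, div_eq_div_iff (by positivity) (ne_of_gt h6)]
    ring
  rw [hrw, div_mul_eq_mul_div, div_le_iff₀ h6]
  push_cast at hq ⊢
  nlinarith [hq]
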